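/- Let p, p̄ ∈ P be such that 𝔸(p) and 𝔸(p̄) are bijective with bounded inverses and ‖𝔸(p̄)⁻¹‖ ≤ C. Then ‖F(p̄) − F(p)‖_V ≤ C ( ‖𝔸(p̄ − p)‖_{op} · ‖F(p)‖_V + ‖𝔹(p̄ − p)‖_W ), and consequently ‖F(p̄) − F(p)‖_V ≤ C ‖p̄ − p‖_P ( ‖𝔸‖ · ‖F(p)‖_V + ‖𝔹‖ ), so F is continuous at p. -/

import Mathlib

/-- Continuity estimate (3.10) for the abstract forward operator
`F(p) := 𝔸(p)⁻¹(ℓ − 𝔹(p))`: with `B = 𝔸(p)⁻¹` and `Bbar = 𝔸(p̄)⁻¹`, `‖𝔸(p̄)⁻¹‖ ≤ C`,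
`‖F(p̄) − F(p)‖ ≤ C (‖𝔸(p̄−p)‖ ‖F(p)‖ + ‖𝔹(p̄−p)‖)` and consequently
`‖F(p̄) − F(p)‖ ≤ C ‖p̄−p‖ (‖𝔸‖ ‖F(p)‖ + ‖𝔹‖)`. -/
theorem forward_operator_continuity_estimate
    {P V W : Type*} [NormedAddCommGroup P] [NormedSpace ℝ P]
    [NormedAddCommGroup V] [NormedSpace ℝ V] [CompleteSpace V]
    [NormedAddCommGroup W] [NormedSpace ℝ W] [CompleteSpace W]
    (𝔸 : P →L[ℝ] V →L[ℝ] W) (𝔹 : P →L[ℝ] W) (ℓ : W)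
    (p pbar : P) (B Bbar : W →L[ℝ] V)
    (hBl : ∀ v, B (𝔸 p v) = v) (hBr : ∀ w, 𝔸 p (B w) = w)
    (hBbarl : ∀ v, Bbar (𝔸 pbar v) = v) (hBbarr : ∀ w, 𝔸 pbar (Bbar w) = w)
    (C : ℝ) (hC : ‖Bbar‖ ≤ C) :
    ‖Bbar (ℓ - 𝔹 pbar) - B (ℓ - 𝔹 p)‖ ≤
        C * (‖𝔸 (pbar - p)‖ * ‖B (ℓ - 𝔹 p)‖ + ‖𝔹 (pbar - p)‖) ∧
      ‖Bbar (ℓ - 𝔹 pbar) - B (ℓ - 𝔹 p)‖ ≤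
        C * ‖pbar - p‖ * (‖𝔸‖ * ‖B (ℓ - 𝔹 p)‖ + ‖𝔹‖) := by
  set u := B (ℓ - 𝔹 p) with hu
  have key : Bbar (ℓ - 𝔹 pbar) - u = Bbar (-(𝔸 (pbar - p) u) - 𝔹 (pbar - p)) := by
    have h1 : u = Bbar (𝔸 pbar u) := (hBbarl u).symm
    have h2 : 𝔸 pbar u = 𝔸 (pbar - p) u + (ℓ - 𝔹 p) := by
      have : 𝔸 p u = ℓ - 𝔹 p := hBr _
      rw [map_sub 𝔸]
      simp [this]
    calc Bbar (ℓ - 𝔹 pbar) - u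
        = Bbar ((ℓ - 𝔹 pbar) - 𝔸 pbar u) := by rw [map_sub Bbar (ℓ - 𝔹 pbar) ((𝔸 pbar) u), hBbarl]
      _ = Bbar (-(𝔸 (pbar - p) u) - 𝔹 (pbar - p)) := by
          rw [h2]; congr 1; rw [map_sub 𝔹]; abel
  have hC0 : (0:ℝ) ≤ C := le_trans (norm_nonneg _) hC
  have est1 : ‖Bbar (ℓ - 𝔹 pbar) - u‖ ≤ C * (‖𝔸 (pbar - p)‖ * ‖u‖ + ‖𝔹 (pbar - p)‖) := by
    rw [key]
    calc ‖Bbar (-(𝔸 (pbar - p) u) - 𝔹 (pbar - p))‖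
        ≤ ‖Bbar‖ * ‖-(𝔸 (pbar - p) u) - 𝔹 (pbar - p)‖ := Bbar.le_opNorm _
      _ ≤ C * (‖𝔸 (pbar - p)‖ * ‖u‖ + ‖𝔹 (pbar - p)‖) := by
          apply mul_le_mul hC _ (norm_nonneg _) hC0
          calc ‖-(𝔸 (pbar - p) u) - 𝔹 (pbar - p)‖
              ≤ ‖-(𝔸 (pbar - p) u)‖ + ‖𝔹 (pbar - p)‖ := norm_sub_le _ _
            _ ≤ ‖𝔸 (pbar - p)‖ * ‖u‖ + ‖𝔹 (pbar - p)‖ := by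
                rw [norm_neg]
                exact add_le_add ((𝔸 (pbar - p)).le_opNorm u) le_rfl
  refine ⟨est1, est1.trans ?_⟩
  have hA : ‖𝔸 (pbar - p)‖ ≤ ‖𝔸‖ * ‖pbar - p‖ := 𝔸.le_opNorm _
  have hB : ‖𝔹 (pbar - p)‖ ≤ ‖𝔹‖ * ‖pbar - p‖ := 𝔹.le_opNorm _
  have : ‖𝔸 (pbar - p)‖ * ‖u‖ + ‖𝔹 (pbar - p)‖ ≤ ‖pbar - p‖ * (‖𝔸‖ * ‖u‖ + ‖𝔹‖) := by
    have h1 : ‖𝔸 (pbar - p)‖ * ‖u‖ ≤ ‖𝔸‖ * ‖pbar - p‖ * ‖u‖ :=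
      mul_le_mul_of_nonneg_right hA (norm_nonneg _)
    nlinarith [norm_nonneg u, norm_nonneg (pbar - p)]
  nlinarith
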